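/- Let G be a bipartite graph with a perfect matching M whose normal components (elementary components of the subgraph formed by non-fixed edges) are G₁, …, G_k. Then af(G, M) = Σᵢ af(Gᵢ, Mᵢ), where Mᵢ is the restriction of M to Gᵢ. -/

import Mathlib

open scoped Classical

variable {V : Type*} [Fintype V] [DecidableEq V]

/-- `M` is a perfect matching of `G`: a set of edges of `G` such that every
vertex lies in exactly one edge of `M`. -/
def IsPM (G : SimpleGraph V) (M : Set (Sym2 V)) : Prop :=
  M ⊆ G.edgeSet ∧ ∀ v : V, ∃! e, e ∈ M ∧ v ∈ e

/-- `M` is the unique perfect matching of `G`. -/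
def IsUniquePM (G : SimpleGraph V) (M : Set (Sym2 V)) : Prop :=
  IsPM G M ∧ ∀ M', IsPM G M' → M' = M

/-- A closed walk `c` is an `M`-alternating cycle: it is a cycle of even length
whose edges lie alternately in `M` and outside `M`. -/
def IsAltCycle {G : SimpleGraph V} (M : Set (Sym2 V)) {v : V} (c : G.Walk v v) : Prop :=
  c.IsCycle ∧ Even c.edges.length ∧
    ((∀ i (h : i < c.edges.length), c.edges.get ⟨i, h⟩ ∈ M ↔ Even i) ∨
     (∀ i (h : i < c.edges.length), c.edges.get ⟨i, h⟩ ∈ M ↔ ¬ Even i))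

/-- `S` is an anti-forcing set of the perfect matching `M` of `G`:
`S` consists of edges of `G` not in `M` and `M` is the unique perfect matching
of `G - S`. -/
def IsAntiForcingSet (G : SimpleGraph V) (M S : Set (Sym2 V)) : Prop :=
  S ⊆ G.edgeSet \ M ∧ IsUniquePM (G.deleteEdges S) M

/-- The anti-forcing number of a perfect matching `M` of `G`. -/
noncomputable def af (G : SimpleGraph V) (M : Set (Sym2 V)) : ℕ :=
  sInf {n | ∃ S : Finset (Sym2 V), S.card = n ∧ IsAntiForcingSet G M ↑S}

/-- The subgraph of `G` formed by the non-fixed edges: edges of `G` lying in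
some but not all perfect matchings of `G`. Its connected components are the
normal (elementary) components of `G`. -/
def nonFixed (G : SimpleGraph V) : SimpleGraph V :=
  SimpleGraph.fromEdgeSet
    {e | e ∈ G.edgeSet ∧ (∃ M, IsPM G M ∧ e ∈ M) ∧ (∃ M, IsPM G M ∧ e ∉ M)}

noncomputable instance (H : SimpleGraph V) : Fintype H.ConnectedComponent :=
  Fintype.ofSurjective H.connectedComponentMk (fun K => K.exists_rep)

/-- The restriction of an edge set `M` on `V` to the subtype `s`. -/
def restrictEdges (s : Set V) (M : Set (Sym2 V)) : Set (Sym2 s) :=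
  {e | Sym2.map (Subtype.val) e ∈ M}

section Helpers

set_option linter.unusedSectionVars false

variable {G : SimpleGraph V} {M M' P : Set (Sym2 V)}

lemma IsPM.unique_edge (h : IsPM G M) {e f : Sym2 V} {v : V}
    (he : e ∈ M) (hf : f ∈ M) (hve : v ∈ e) (hvf : v ∈ f) : e = f := by
  obtain ⟨g, -, hu⟩ := h.2 v
  rw [hu e ⟨he, hve⟩, hu f ⟨hf, hvf⟩]

lemma IsPM.of_deleteEdges {S : Set (Sym2 V)} (h : IsPM (G.deleteEdges S) M) : IsPM G M := by
  refine ⟨fun e he => ?_, h.2⟩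
  have := h.1 he
  rw [SimpleGraph.edgeSet_deleteEdges] at this
  exact this.1

lemma IsPM.eq_of_subset (h : IsPM G M) (h' : IsPM G M') (hss : M' ⊆ M) : M' = M := by
  refine Set.Subset.antisymm hss fun e he => ?_
  induction e using Sym2.ind with
  | _ a b =>
    obtain ⟨f, ⟨hf, haf⟩, -⟩ := h'.2 a
    have : f = s(a, b) := h.unique_edge (hss hf) he haf (by simp)
    rwa [← this]

lemma exists_antiforcing_finset (h : IsPM G M) :
    ∃ S : Finset (Sym2 V), IsAntiForcingSet G M ↑S := by
  refine ⟨(G.edgeSet \ M).toFinset, ?_⟩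
  rw [Set.coe_toFinset]
  have hpm : IsPM (G.deleteEdges (G.edgeSet \ M)) M := by
    refine ⟨fun e he => ?_, h.2⟩
    rw [SimpleGraph.edgeSet_deleteEdges]
    exact ⟨h.1 he, fun hc => hc.2 he⟩
  refine ⟨le_refl _, hpm, fun N hN => ?_⟩
  refine hpm.eq_of_subset hN fun e he => ?_
  have := hN.1 he
  rw [SimpleGraph.edgeSet_deleteEdges] at this
  by_contra hc
  exact this.2 ⟨this.1, hc⟩

lemma nonFixed_edgeSet {e : Sym2 V} : e ∈ (nonFixed G).edgeSet ↔
    e ∈ G.edgeSet ∧ (∃ N, IsPM G N ∧ e ∈ N) ∧ ∃ N, IsPM G N ∧ e ∉ N := by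
  rw [nonFixed, SimpleGraph.edgeSet_fromEdgeSet]
  constructor
  · exact fun h => h.1
  · exact fun h => ⟨h, G.not_isDiag_of_mem_edgeSet h.1⟩

def Good (G : SimpleGraph V) (K : (nonFixed G).ConnectedComponent) : Prop :=
  ∃ u w, u ∈ K.supp ∧ (nonFixed G).Adj u w

lemma Good.adj_of_mem {K : (nonFixed G).ConnectedComponent} (hK : Good G K) {v : V}
    (hv : v ∈ K.supp) : ∃ w, (nonFixed G).Adj v w := by
  obtain ⟨u, w, hu, huw⟩ := hK
  rw [SimpleGraph.ConnectedComponent.mem_supp_iff] at hv hu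
  obtain ⟨p⟩ := SimpleGraph.ConnectedComponent.exact (hv.trans hu.symm)
  cases p with
  | nil => exact ⟨w, huw⟩
  | cons h _ => exact ⟨_, h⟩

lemma mem_supp_of_adj {K : (nonFixed G).ConnectedComponent} {v w : V}
    (hv : v ∈ K.supp) (h : (nonFixed G).Adj v w) : w ∈ K.supp := by
  rw [SimpleGraph.ConnectedComponent.mem_supp_iff] at hv ⊢
  rw [← hv]
  exact (SimpleGraph.ConnectedComponent.sound h.reachable).symm

lemma Good.pm_edge {K : (nonFixed G).ConnectedComponent} (hK : Good G K) (hP : IsPM G P)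
    {v : V} (hv : v ∈ K.supp) :
    ∃ w, w ∈ K.supp ∧ s(v, w) ∈ P ∧ (nonFixed G).Adj v w := by
  obtain ⟨u, hvu⟩ := hK.adj_of_mem hv
  have hu : s(v, u) ∈ (nonFixed G).edgeSet := hvu
  rw [nonFixed_edgeSet] at hu
  obtain ⟨-, ⟨N, hN, hNin⟩, ⟨N', hN', hNout⟩⟩ := hu
  obtain ⟨e, ⟨heP, hve⟩, -⟩ := hP.2 v
  obtain ⟨w, rfl⟩ := Sym2.mem_iff_exists.1 hve
  have hnf : s(v, w) ∈ (nonFixed G).edgeSet := by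
    rw [nonFixed_edgeSet]
    refine ⟨hP.1 heP, ⟨P, hP, heP⟩, ?_⟩
    by_cases hcase : s(v, w) = s(v, u)
    · exact ⟨N', hN', by rw [hcase]; exact hNout⟩
    · exact ⟨N, hN, fun hc => hcase
        (hN.unique_edge hc hNin (Sym2.mem_iff.2 (Or.inl rfl)) (Sym2.mem_iff.2 (Or.inl rfl)))⟩
  have hadj : (nonFixed G).Adj v w := hnf
  exact ⟨w, mem_supp_of_adj hv hadj, heP, hadj⟩

lemma mem_supp_of_pm_edge {K : (nonFixed G).ConnectedComponent} (hK : Good G K)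
    (hP : IsPM G P) {e : Sym2 V} (he : e ∈ P) {x y : V} (hx : x ∈ e) (hxs : x ∈ K.supp)
    (hy : y ∈ e) : y ∈ K.supp := by
  obtain ⟨w, hw, hPw, -⟩ := hK.pm_edge hP hxs
  have : e = s(x, w) := hP.unique_edge he hPw hx (by simp)
  subst this
  rcases Sym2.mem_iff.1 hy with rfl | rfl
  · exact hxs
  · exact hw

lemma restrict_isPM_del {K : (nonFixed G).ConnectedComponent} (hK : Good G K)
    (hP : IsPM G P) (S' : Set (Sym2 K.supp))
    (hdisj : ∀ f ∈ S', Sym2.map Subtype.val f ∉ P) :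
    IsPM ((SimpleGraph.induce K.supp (nonFixed G)).deleteEdges S')
      (restrictEdges K.supp P) := by
  constructor
  · intro f hf
    rw [SimpleGraph.edgeSet_deleteEdges]
    refine ⟨?_, fun hc => hdisj f hc hf⟩
    induction f using Sym2.ind with
    | _ a b =>
      have hmem : s((a : V), (b : V)) ∈ P := by
        simpa [restrictEdges, Sym2.map_pair_eq] using hf
      obtain ⟨w, hw, hPw, hadj⟩ := hK.pm_edge hP a.2
      have hb : (b : V) = w :=
        Sym2.congr_right.1 (hP.unique_edge hmem hPw (Sym2.mem_iff.2 (Or.inl rfl))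
          (Sym2.mem_iff.2 (Or.inl rfl)))
      rw [SimpleGraph.mem_edgeSet]
      refine SimpleGraph.comap_adj.2 ?_
      show (nonFixed G).Adj (a : V) (b : V)
      rw [hb]
      exact hadj
  · intro v
    obtain ⟨w, hw, hPw, hadj⟩ := hK.pm_edge hP v.2
    refine ⟨s(v, ⟨w, hw⟩), ⟨?_, by simp⟩, ?_⟩
    · show Sym2.map _ _ ∈ P
      rw [Sym2.map_pair_eq]
      exact hPw
    · rintro f ⟨hfP, hvf⟩
      have hvm : (v : V) ∈ Sym2.map Subtype.val f := Sym2.mem_map.2 ⟨v, hvf, rfl⟩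
      have hmap : Sym2.map Subtype.val f = s((v : V), w) :=
        hP.unique_edge hfP hPw hvm (by simp)
      apply Sym2.map.injective Subtype.val_injective
      rw [hmap, Sym2.map_pair_eq]

lemma restrict_isPM {K : (nonFixed G).ConnectedComponent} (hK : Good G K) (hP : IsPM G P) :
    IsPM (SimpleGraph.induce K.supp (nonFixed G)) (restrictEdges K.supp P) := by
  have := restrict_isPM_del hK hP ∅ (by simp)
  rwa [SimpleGraph.deleteEdges_empty] at this

lemma af_eq_zero_of_not_good {K : (nonFixed G).ConnectedComponent} (hK : ¬ Good G K) :
    af (SimpleGraph.induce K.supp (nonFixed G)) (restrictEdges K.supp M) = 0 := by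
  have hempty : {n | ∃ S : Finset (Sym2 K.supp), S.card = n ∧
      IsAntiForcingSet (SimpleGraph.induce K.supp (nonFixed G))
        (restrictEdges K.supp M) ↑S} = ∅ := by
    ext n
    simp only [Set.mem_setOf_eq, Set.mem_empty_iff_false, iff_false]
    rintro ⟨S, -, -, ⟨hPM, -⟩⟩
    obtain ⟨v, hv⟩ := K.exists_rep
    have hv' : v ∈ K.supp := by rwa [SimpleGraph.ConnectedComponent.mem_supp_iff]
    obtain ⟨f, ⟨hfM, -⟩, -⟩ := hPM.2 ⟨v, hv'⟩
    have hf := hPM.1 hfM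
    rw [SimpleGraph.edgeSet_deleteEdges] at hf
    induction f using Sym2.ind with
    | _ a b =>
      have hadj : (SimpleGraph.induce K.supp (nonFixed G)).Adj a b :=
        (SimpleGraph.mem_edgeSet _).1 hf.1
      exact hK ⟨a, b, a.2, SimpleGraph.comap_adj.1 hadj⟩
  rw [af, hempty, Nat.sInf_empty]

end Helpers

section Transfer

set_option linter.unusedSectionVars false

variable {G : SimpleGraph V} {M M' P : Set (Sym2 V)}

lemma map_mem_nonFixed_edgeSet {K : (nonFixed G).ConnectedComponent}
    {f : Sym2 (K.supp : Set V)} (hf : f ∈ (SimpleGraph.induce K.supp (nonFixed G)).edgeSet) :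
    Sym2.map Subtype.val f ∈ (nonFixed G).edgeSet := by
  induction f using Sym2.ind with
  | _ a b =>
    have hadj : (SimpleGraph.induce K.supp (nonFixed G)).Adj a b :=
      (SimpleGraph.mem_edgeSet _).1 hf
    rw [Sym2.map_pair_eq, SimpleGraph.mem_edgeSet]
    exact SimpleGraph.comap_adj.1 hadj

lemma global_antiforcing (hM : IsPM G M)
    (T : ∀ K : (nonFixed G).ConnectedComponent, Finset (Sym2 (K.supp : Set V)))
    (hT : ∀ K, Good G K → IsAntiForcingSet (SimpleGraph.induce K.supp (nonFixed G))
      (restrictEdges K.supp M) ↑(T K))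
    (hbad : ∀ K, ¬ Good G K → T K = ∅) :
    IsAntiForcingSet G M
      ↑(Finset.univ.biUnion fun K => (T K).image (Sym2.map Subtype.val)) := by
  set S := Finset.univ.biUnion fun K : (nonFixed G).ConnectedComponent =>
    (T K).image (Sym2.map Subtype.val) with hSdef
  have hmemS : ∀ e : Sym2 V, e ∈ (S : Set (Sym2 V)) ↔
      ∃ K, Good G K ∧ ∃ f ∈ T K, Sym2.map Subtype.val f = e := by
    intro e
    simp only [hSdef, Finset.mem_coe, Finset.mem_biUnion, Finset.mem_image, Finset.mem_univ,
      true_and]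
    constructor
    · rintro ⟨K, f, hf, rfl⟩
      by_cases hg : Good G K
      · exact ⟨K, hg, f, hf, rfl⟩
      · rw [hbad K hg] at hf
        exact absurd hf (Finset.notMem_empty f)
    · rintro ⟨K, -, f, hf, rfl⟩
      exact ⟨K, f, hf, rfl⟩
  have hSsub : (S : Set (Sym2 V)) ⊆ G.edgeSet \ M := by
    intro e he
    obtain ⟨K, hg, f, hf, rfl⟩ := (hmemS e).1 he
    have hfe := (hT K hg).1 (Finset.mem_coe.2 hf)
    refine ⟨(nonFixed_edgeSet.1 (map_mem_nonFixed_edgeSet hfe.1)).1, fun hc => hfe.2 hc⟩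
  have hpm : IsPM (G.deleteEdges ↑S) M := by
    refine ⟨fun e he => ?_, hM.2⟩
    rw [SimpleGraph.edgeSet_deleteEdges]
    exact ⟨hM.1 he, fun hc => (hSsub hc).2 he⟩
  refine ⟨hSsub, hpm, fun M' hM' => ?_⟩
  have hM'sub := hM'.1
  rw [SimpleGraph.edgeSet_deleteEdges] at hM'sub
  have hM'G : IsPM G M' := hM'.of_deleteEdges
  refine hpm.eq_of_subset hM' fun e => ?_
  induction e using Sym2.ind with
  | _ v w =>
    intro he
    by_cases heM : s(v, w) ∈ M
    · exact heM
    have henf : s(v, w) ∈ (nonFixed G).edgeSet :=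
      nonFixed_edgeSet.2 ⟨hM'G.1 he, ⟨M', hM'G, he⟩, ⟨M, hM, heM⟩⟩
    have hadj : (nonFixed G).Adj v w := henf
    set K := (nonFixed G).connectedComponentMk v with hKdef
    have hv : v ∈ K.supp := by rw [SimpleGraph.ConnectedComponent.mem_supp_iff]
    have hg : Good G K := ⟨v, w, hv, hadj⟩
    have hw : w ∈ K.supp := mem_supp_of_adj hv hadj
    have hNK : IsPM ((SimpleGraph.induce K.supp (nonFixed G)).deleteEdges ↑(T K))
        (restrictEdges K.supp M') := by
      refine restrict_isPM_del hg hM'G ↑(T K) fun f hf hc => ?_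
      exact (hM'sub hc).2 ((hmemS _).2 ⟨K, hg, f, Finset.mem_coe.1 hf, rfl⟩)
    have heq := (hT K hg).2.2 _ hNK
    have hfm : s((⟨v, hv⟩ : K.supp), (⟨w, hw⟩ : K.supp)) ∈ restrictEdges K.supp M' := by
      show Sym2.map _ _ ∈ M'
      rw [Sym2.map_pair_eq]
      exact he
    rw [heq] at hfm
    have : Sym2.map Subtype.val s((⟨v, hv⟩ : K.supp), (⟨w, hw⟩ : K.supp)) ∈ M := hfm
    rwa [Sym2.map_pair_eq] at this

lemma local_antiforcing (hM : IsPM G M) {S : Set (Sym2 V)} (hS : IsAntiForcingSet G M S)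
    {K : (nonFixed G).ConnectedComponent} (hK : Good G K) :
    IsAntiForcingSet (SimpleGraph.induce K.supp (nonFixed G)) (restrictEdges K.supp M)
      (restrictEdges K.supp S ∩ (SimpleGraph.induce K.supp (nonFixed G)).edgeSet) := by
  set Gi := SimpleGraph.induce K.supp (nonFixed G) with hGidef
  set Si := restrictEdges K.supp S ∩ Gi.edgeSet with hSidef
  have hdisjM : ∀ f ∈ Si, Sym2.map Subtype.val f ∉ M := fun f hf hc => (hS.1 hf.1).2 hc
  have hMi : IsPM (Gi.deleteEdges Si) (restrictEdges K.supp M) :=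
    restrict_isPM_del hK hM Si hdisjM
  refine ⟨fun f hf => ⟨hf.2, fun hc => (hS.1 hf.1).2 hc⟩, hMi, fun Ni hNi => ?_⟩
  set N : Set (Sym2 V) :=
    {e | e ∈ M ∧ ∀ x ∈ e, x ∉ K.supp} ∪ (Sym2.map Subtype.val '' Ni) with hNdef
  have hNisub := hNi.1
  rw [SimpleGraph.edgeSet_deleteEdges] at hNisub
  have hNpm : IsPM (G.deleteEdges S) N := by
    constructor
    · rintro e (⟨heM, -⟩ | ⟨f, hf, rfl⟩)
      · rw [SimpleGraph.edgeSet_deleteEdges]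
        exact ⟨hM.1 heM, fun hc => (hS.1 hc).2 heM⟩
      · have hfe := hNisub hf
        have hGe : Sym2.map Subtype.val f ∈ G.edgeSet :=
          (nonFixed_edgeSet.1 (map_mem_nonFixed_edgeSet hfe.1)).1
        rw [SimpleGraph.edgeSet_deleteEdges]
        exact ⟨hGe, fun hc => hfe.2 ⟨hc, hfe.1⟩⟩
    · intro x
      by_cases hx : x ∈ K.supp
      · obtain ⟨f, ⟨hfNi, hxf⟩, hfu⟩ := hNi.2 ⟨x, hx⟩
        refine ⟨Sym2.map Subtype.val f,
          ⟨Or.inr ⟨f, hfNi, rfl⟩, Sym2.mem_map.2 ⟨⟨x, hx⟩, hxf, rfl⟩⟩, ?_⟩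
        rintro e' ⟨(⟨-, hall⟩ | ⟨f', hf', rfl⟩), hxe'⟩
        · exact absurd hx (hall x hxe')
        · obtain ⟨a, haf', ha⟩ := Sym2.mem_map.1 hxe'
          have hax : a = ⟨x, hx⟩ := Subtype.ext ha
          subst hax
          rw [hfu f' ⟨hf', haf'⟩]
      · obtain ⟨e, ⟨heM, hxe⟩, heu⟩ := hM.2 x
        have hall : ∀ y ∈ e, y ∉ K.supp := fun y hy hys =>
          hx (mem_supp_of_pm_edge hK hM heM hy hys hxe)
        refine ⟨e, ⟨Or.inl ⟨heM, hall⟩, hxe⟩, ?_⟩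
        rintro e' ⟨(⟨heM', -⟩ | ⟨f', hf', rfl⟩), hxe'⟩
        · exact heu e' ⟨heM', hxe'⟩
        · obtain ⟨a, -, ha⟩ := Sym2.mem_map.1 hxe'
          exact absurd (ha ▸ a.2) hx
  have hNM : N = M := hS.2.2 N hNpm
  have hsub : Ni ⊆ restrictEdges K.supp M := by
    intro f hf
    have hmem : Sym2.map Subtype.val f ∈ N := Or.inr ⟨f, hf, rfl⟩
    rw [hNM] at hmem
    exact hmem
  exact hMi.eq_of_subset hNi hsub

end Transfer

section Counting

set_option linter.unusedSectionVars false

variable {G : SimpleGraph V} {M : Set (Sym2 V)}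

lemma exists_mem_supp {K : (nonFixed G).ConnectedComponent} (f : Sym2 (K.supp : Set V)) :
    ∃ x ∈ Sym2.map Subtype.val f, x ∈ K.supp := by
  induction f using Sym2.ind with
  | _ a b => exact ⟨a, by rw [Sym2.map_pair_eq]; simp, a.2⟩

lemma mem_supp_of_mem_map {K : (nonFixed G).ConnectedComponent} {f : Sym2 (K.supp : Set V)}
    {x : V} (hx : x ∈ Sym2.map Subtype.val f) : x ∈ K.supp := by
  obtain ⟨a, -, rfl⟩ := Sym2.mem_map.1 hx
  exact a.2

lemma mk_eq_of_mem_edge {e : Sym2 V} (he : e ∈ (nonFixed G).edgeSet) {x y : V}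
    (hx : x ∈ e) (hy : y ∈ e) :
    (nonFixed G).connectedComponentMk x = (nonFixed G).connectedComponentMk y := by
  obtain ⟨z, rfl⟩ := Sym2.mem_iff_exists.1 hx
  have hadj : (nonFixed G).Adj x z := he
  rcases Sym2.mem_iff.1 hy with rfl | rfl
  · rfl
  · exact SimpleGraph.ConnectedComponent.sound hadj.reachable

end Counting

theorem statement8' (G : SimpleGraph V)
    (M : Set (Sym2 V)) (hM : IsPM G M) :
    af G M =
      ∑ K : (nonFixed G).ConnectedComponent,
        af (SimpleGraph.induce K.supp (nonFixed G)) (restrictEdges K.supp M) := by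
  classical
  apply le_antisymm
  · -- choose an optimal local anti-forcing set for each good component
    have hgood : ∀ K : (nonFixed G).ConnectedComponent, Good G K →
        ∃ T : Finset (Sym2 (K.supp : Set V)),
          T.card = af (SimpleGraph.induce K.supp (nonFixed G)) (restrictEdges K.supp M) ∧
          IsAntiForcingSet (SimpleGraph.induce K.supp (nonFixed G))
            (restrictEdges K.supp M) ↑T := by
      intro K hK
      have hne : {n | ∃ S : Finset (Sym2 (K.supp : Set V)), S.card = n ∧
          IsAntiForcingSet (SimpleGraph.induce K.supp (nonFixed G))
            (restrictEdges K.supp M) ↑S}.Nonempty := by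
        obtain ⟨S0, hS0⟩ := exists_antiforcing_finset (restrict_isPM hK hM)
        exact ⟨S0.card, S0, rfl, hS0⟩
      have hmem : af (SimpleGraph.induce K.supp (nonFixed G)) (restrictEdges K.supp M) ∈
          {n | ∃ S : Finset (Sym2 (K.supp : Set V)), S.card = n ∧
          IsAntiForcingSet (SimpleGraph.induce K.supp (nonFixed G))
            (restrictEdges K.supp M) ↑S} := Nat.sInf_mem hne
      obtain ⟨T, hT1, hT2⟩ := hmem
      exact ⟨T, hT1, hT2⟩
    set T : ∀ K : (nonFixed G).ConnectedComponent, Finset (Sym2 (K.supp : Set V)) :=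
      fun K => if h : Good G K then (hgood K h).choose else ∅ with hTdef
    have hTcard : ∀ K, (T K).card =
        af (SimpleGraph.induce K.supp (nonFixed G)) (restrictEdges K.supp M) := by
      intro K
      by_cases h : Good G K
      · simp only [hTdef, dif_pos h]
        exact (hgood K h).choose_spec.1
      · simp only [hTdef, dif_neg h, Finset.card_empty]
        exact (af_eq_zero_of_not_good h).symm
    have hTaf : ∀ K, Good G K → IsAntiForcingSet (SimpleGraph.induce K.supp (nonFixed G))
        (restrictEdges K.supp M) ↑(T K) := by
      intro K h
      simp only [hTdef, dif_pos h]
      exact (hgood K h).choose_spec.2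
    have hTbad : ∀ K, ¬ Good G K → T K = ∅ := by
      intro K h
      simp only [hTdef, dif_neg h]
    have hglob := global_antiforcing hM T hTaf hTbad
    have h1 : af G M ≤ (Finset.univ.biUnion fun K =>
        (T K).image (Sym2.map Subtype.val)).card := Nat.sInf_le ⟨_, rfl, hglob⟩
    refine h1.trans (le_of_eq ?_)
    rw [Finset.card_biUnion]
    · refine Finset.sum_congr rfl fun K _ => ?_
      rw [Finset.card_image_of_injective _ (Sym2.map.injective Subtype.val_injective), hTcard]
    · rintro K - K' - hKK'
      rw [Function.onFun_apply, Finset.disjoint_left]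
      intro e heK heK'
      obtain ⟨f, -, rfl⟩ := Finset.mem_image.1 heK
      obtain ⟨f', -, hf'⟩ := Finset.mem_image.1 heK'
      obtain ⟨x, hxe, hxK⟩ := exists_mem_supp f
      have hxK' : x ∈ K'.supp := mem_supp_of_mem_map (hf' ▸ hxe)
      rw [SimpleGraph.ConnectedComponent.mem_supp_iff] at hxK hxK'
      exact hKK' (hxK ▸ hxK' ▸ rfl)
  · have hne : {n | ∃ S : Finset (Sym2 V), S.card = n ∧ IsAntiForcingSet G M ↑S}.Nonempty := by
      obtain ⟨S0, hS0⟩ := exists_antiforcing_finset hM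
      exact ⟨S0.card, S0, rfl, hS0⟩
    have hmem : af G M ∈ {n | ∃ S : Finset (Sym2 V), S.card = n ∧ IsAntiForcingSet G M ↑S} :=
      Nat.sInf_mem hne
    obtain ⟨S0, hcard, hanti⟩ := hmem
    set t : (nonFixed G).ConnectedComponent → Finset (Sym2 V) := fun K =>
      S0.filter fun e => e ∈ (nonFixed G).edgeSet ∧ ∃ x ∈ e, x ∈ K.supp with htdef
    have hdisj : ∀ K ∈ (Finset.univ : Finset (nonFixed G).ConnectedComponent),
        ∀ K' ∈ Finset.univ, K ≠ K' → Disjoint (t K) (t K') := by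
      rintro K - K' - hKK'
      rw [Finset.disjoint_left]
      intro e heK heK'
      simp only [htdef, Finset.mem_filter] at heK heK'
      obtain ⟨-, henf, x, hxe, hxK⟩ := heK
      obtain ⟨-, -, y, hye, hyK'⟩ := heK'
      have := mk_eq_of_mem_edge henf hxe hye
      rw [SimpleGraph.ConnectedComponent.mem_supp_iff] at hxK hyK'
      exact hKK' (hxK ▸ hyK' ▸ this)
    have hperK : ∀ K : (nonFixed G).ConnectedComponent,
        af (SimpleGraph.induce K.supp (nonFixed G)) (restrictEdges K.supp M) ≤ (t K).card := by
      intro K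
      by_cases hK : Good G K
      · set Gi := SimpleGraph.induce K.supp (nonFixed G) with hGidef
        set Si := restrictEdges K.supp ↑S0 ∩ Gi.edgeSet with hSidef
        have hloc := local_antiforcing hM hanti hK
        have haf1 : af Gi (restrictEdges K.supp M) ≤ Si.toFinset.card := by
          refine Nat.sInf_le ⟨Si.toFinset, rfl, ?_⟩
          rw [Set.coe_toFinset]
          exact hloc
        refine haf1.trans ?_
        refine Finset.card_le_card_of_injOn (Sym2.map Subtype.val) ?_ ?_
        · intro f hf
          rw [Finset.mem_coe, Set.mem_toFinset] at hf
          simp only [htdef, Finset.mem_coe, Finset.mem_filter]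
          obtain ⟨x, hxe, hxK⟩ := exists_mem_supp f
          exact ⟨hf.1, map_mem_nonFixed_edgeSet hf.2, x, hxe, hxK⟩
        · exact (Sym2.map.injective Subtype.val_injective).injOn
      · rw [af_eq_zero_of_not_good hK]
        exact Nat.zero_le _
    calc ∑ K : (nonFixed G).ConnectedComponent,
          af (SimpleGraph.induce K.supp (nonFixed G)) (restrictEdges K.supp M)
        ≤ ∑ K : (nonFixed G).ConnectedComponent, (t K).card :=
          Finset.sum_le_sum fun K _ => hperK K
      _ = (Finset.univ.biUnion t).card := (Finset.card_biUnion hdisj).symm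
      _ ≤ S0.card := Finset.card_le_card (Finset.biUnion_subset.2 fun K _ =>
          Finset.filter_subset _ _)
      _ = af G M := hcard

/-- For a bipartite graph `G` with perfect matching `M`,
`af(G, M)` equals the sum over the normal components `Gᵢ` (components of the
subgraph of non-fixed edges) of `af(Gᵢ, Mᵢ)`, where `Mᵢ` is the restriction of
`M` to `Gᵢ`. -/
theorem statement8 (G : SimpleGraph V) (hbip : G.Colorable 2)
    (M : Set (Sym2 V)) (hM : IsPM G M) :
    af G M =
      ∑ K : (nonFixed G).ConnectedComponent,
        af (SimpleGraph.induce K.supp (nonFixed G)) (restrictEdges K.supp M) :=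
  statement8' G M hM
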